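/- Let u be the true odometer stabilizing a finite interval V ⊆ ℤ with given instructions and an initial configuration with no sleeping particles, and let u' be an odometer on ℤ that is weakly stable on V for the same instructions and initial configuration. Then u(v) ≤ u'(v) for all v ∈ V. -/

import Mathlib

/-- ARW instructions. -/
inductive Instr : Type
  | left
  | right
  | sleep
deriving DecidableEq

/-- The state of a single site: a sleeping particle, or `n` active particles. -/
inductive SiteState : Type
  | sleeping
  | active (n : ℕ)
deriving DecidableEq

/-- Adding one (active) particle to a site. -/
def addP : SiteState → SiteState
  | SiteState.sleeping => SiteState.active 2
  | SiteState.active n => SiteState.active (n + 1)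

/-- Removing one particle from a site (only meaningful for active sites). -/
def removeP : SiteState → SiteState
  | SiteState.sleeping => SiteState.sleeping
  | SiteState.active n => SiteState.active (n - 1)

/-- The effect of executing instruction `ins` at site `v` on the configuration. -/
def applyInstr (c : ℤ → SiteState) (v : ℤ) : Instr → (ℤ → SiteState)
  | Instr.left => fun w =>
      if w = v then removeP (c v) else if w = v - 1 then addP (c w) else c w
  | Instr.right => fun w =>
      if w = v then removeP (c v) else if w = v + 1 then addP (c w) else c w
  | Instr.sleep => fun w =>
      if w = v then (if c v = SiteState.active 1 then SiteState.sleeping else c v)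
      else c w

/-- Running a toppling sequence (a list of sites) from a configuration and an
odometer: each toppling at `v` executes the next unexecuted instruction at `v`
and increments the odometer there. -/
def run (instr : ℤ → ℕ → Instr) :
    List ℤ → (ℤ → SiteState) × (ℤ → ℕ) → (ℤ → SiteState) × (ℤ → ℕ)
  | [], p => p
  | v :: l, p =>
      run instr l
        (applyInstr p.1 v (instr v (p.2 v + 1)), Function.update p.2 v (p.2 v + 1))

/-- A toppling sequence is legal if each toppled site has at least one active
particle at the time it is toppled. -/
def Legal (instr : ℤ → ℕ → Instr) :
    List ℤ → (ℤ → SiteState) × (ℤ → ℕ) → Prop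
  | [], _ => True
  | v :: l, p => (∃ m : ℕ, p.1 v = SiteState.active (m + 1)) ∧
      Legal instr l
        (applyInstr p.1 v (instr v (p.2 v + 1)), Function.update p.2 v (p.2 v + 1))

/-- A configuration is stable on `V` if every site of `V` holds either a single
sleeping particle or no particle. -/
def StableOn (c : ℤ → SiteState) (V : Finset ℤ) : Prop :=
  ∀ v ∈ V, c v = SiteState.sleeping ∨ c v = SiteState.active 0

/-- The number of `left` instructions among the first `u v` instructions at `v`. -/
def Lcount (instr : ℤ → ℕ → Instr) (u : ℤ → ℕ) (v : ℤ) : ℕ :=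
  ((Finset.Icc 1 (u v)).filter fun i => instr v i = Instr.left).card

/-- The number of `right` instructions among the first `u v` instructions at `v`. -/
def Rcount (instr : ℤ → ℕ → Instr) (u : ℤ → ℕ) (v : ℤ) : ℕ :=
  ((Finset.Icc 1 (u v)).filter fun i => instr v i = Instr.right).card

/-- The number of particles left at `v` by the odometer `u`, starting from the
all-active configuration `σ`. -/
def height (instr : ℤ → ℕ → Instr) (σ : ℤ → ℕ) (u : ℤ → ℕ) (v : ℤ) : ℤ :=
  (σ v : ℤ) + (Rcount instr u (v - 1) : ℤ) + (Lcount instr u (v + 1) : ℤ)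
    - (Lcount instr u v : ℤ) - (Rcount instr u v : ℤ)

/-- Weak stability of the odometer `u` at `v`. -/
def WeaklyStableAt (instr : ℤ → ℕ → Instr) (σ : ℤ → ℕ) (u : ℤ → ℕ) (v : ℤ) : Prop :=
  (height instr σ u v = 0 ∨ height instr σ u v = 1) ∧
    (height instr σ u v = 1 → instr v (u v) = Instr.sleep)

section Aux

/-- Number of particles at a site, as an integer. -/
def pz : SiteState → ℤ
  | SiteState.sleeping => 1
  | SiteState.active n => n

lemma pz_addP (s : SiteState) : pz (addP s) = pz s + 1 := by
  cases s <;> simp [addP, pz]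

variable (instr : ℤ → ℕ → Instr)

lemma Lcount_eq_of {m m' : ℤ → ℕ} {v : ℤ} (h : m v = m' v) :
    Lcount instr m v = Lcount instr m' v := by unfold Lcount; rw [h]

lemma Rcount_eq_of {m m' : ℤ → ℕ} {v : ℤ} (h : m v = m' v) :
    Rcount instr m v = Rcount instr m' v := by unfold Rcount; rw [h]

lemma Lcount_mono {m m' : ℤ → ℕ} {v : ℤ} (h : m v ≤ m' v) :
    Lcount instr m v ≤ Lcount instr m' v :=
  Finset.card_le_card (Finset.filter_subset_filter _ (Finset.Icc_subset_Icc_right h))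

lemma Rcount_mono {m m' : ℤ → ℕ} {v : ℤ} (h : m v ≤ m' v) :
    Rcount instr m v ≤ Rcount instr m' v :=
  Finset.card_le_card (Finset.filter_subset_filter _ (Finset.Icc_subset_Icc_right h))

lemma Lcount_update (m : ℤ → ℕ) (v x : ℤ) :
    Lcount instr (Function.update m v (m v + 1)) x =
      Lcount instr m x + (if x = v ∧ instr v (m v + 1) = Instr.left then 1 else 0) := by
  by_cases h : x = v
  · subst h
    unfold Lcount
    rw [Function.update_self, ← Finset.insert_Icc_right_eq_Icc_add_one (by omega),
      Finset.filter_insert]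
    split_ifs with h1 h2 h2
    · rw [Finset.card_insert_of_notMem (by simp)]
    · exact absurd ⟨rfl, h1⟩ h2
    · exact absurd h2.2 h1
    · simp
  · unfold Lcount
    rw [Function.update_of_ne h]
    simp [h]

lemma Rcount_update (m : ℤ → ℕ) (v x : ℤ) :
    Rcount instr (Function.update m v (m v + 1)) x =
      Rcount instr m x + (if x = v ∧ instr v (m v + 1) = Instr.right then 1 else 0) := by
  by_cases h : x = v
  · subst h
    unfold Rcount
    rw [Function.update_self, ← Finset.insert_Icc_right_eq_Icc_add_one (by omega),
      Finset.filter_insert]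
    split_ifs with h1 h2 h2
    · rw [Finset.card_insert_of_notMem (by simp)]
    · exact absurd ⟨rfl, h1⟩ h2
    · exact absurd h2.2 h1
    · simp
  · unfold Rcount
    rw [Function.update_of_ne h]
    simp [h]

lemma height_update (σ : ℤ → ℕ) (m : ℤ → ℕ) (v w : ℤ) :
    height instr σ (Function.update m v (m v + 1)) w =
      height instr σ m w
        + (if w + 1 = v ∧ instr v (m v + 1) = Instr.left then 1 else 0)
        + (if w - 1 = v ∧ instr v (m v + 1) = Instr.right then 1 else 0)
        - (if w = v ∧ instr v (m v + 1) = Instr.left then 1 else 0)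
        - (if w = v ∧ instr v (m v + 1) = Instr.right then 1 else 0) := by
  unfold height
  rw [Lcount_update, Lcount_update, Rcount_update, Rcount_update]
  push_cast
  split_ifs <;> ring

/-- The invariant preserved along a legal toppling sequence inside `V`. -/
def ARWInv (σ : ℤ → ℕ) (V : Finset ℤ) (u' : ℤ → ℕ)
    (p : (ℤ → SiteState) × (ℤ → ℕ)) : Prop :=
  (∀ w, w ∉ V → p.2 w = 0) ∧
  (∀ w ∈ V, p.2 w ≤ u' w) ∧
  (∀ w, height instr σ p.2 w = pz (p.1 w)) ∧
  (∀ w, instr w (p.2 w) = Instr.sleep →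
    p.1 w ≠ SiteState.active 0 ∧ p.1 w ≠ SiteState.active 1)

lemma step_bound (σ : ℤ → ℕ) (V : Finset ℤ) (u' : ℤ → ℕ)
    (hws : ∀ v ∈ V, WeaklyStableAt instr σ u' v)
    (c : ℤ → SiteState) (m : ℤ → ℕ) (v : ℤ) (hv : v ∈ V)
    (hI : ARWInv instr σ V u' (c, m)) (k : ℕ) (hleg : c v = SiteState.active (k + 1)) :
    m v + 1 ≤ u' v := by
  obtain ⟨ha, hb, hc, hd⟩ := hI
  dsimp only at ha hb hc hd
  by_contra hcon
  have heq : m v = u' v := le_antisymm (hb v hv) (by omega)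
  have hL : Lcount instr m v = Lcount instr u' v := Lcount_eq_of instr heq
  have hR : Rcount instr m v = Rcount instr u' v := Rcount_eq_of instr heq
  have hRm : Rcount instr m (v - 1) ≤ Rcount instr u' (v - 1) := by
    by_cases h1 : v - 1 ∈ V
    · exact Rcount_mono instr (hb _ h1)
    · have h0 : m (v - 1) = 0 := ha _ h1
      have : Rcount instr m (v - 1) = 0 := by simp [Rcount, h0]
      omega
  have hLm : Lcount instr m (v + 1) ≤ Lcount instr u' (v + 1) := by
    by_cases h1 : v + 1 ∈ V
    · exact Lcount_mono instr (hb _ h1)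
    · have h0 : m (v + 1) = 0 := ha _ h1
      have : Lcount instr m (v + 1) = 0 := by simp [Lcount, h0]
      omega
  have hh : height instr σ m v = (k : ℤ) + 1 := by
    rw [hc v, hleg]; simp [pz]
  have hcmp : height instr σ m v ≤ height instr σ u' v := by
    unfold height; omega
  obtain ⟨hws1, hws2⟩ := hws v hv
  have h1 : height instr σ u' v = 1 := by rcases hws1 with h | h <;> omega
  have hk : k = 0 := by omega
  have hsleep := hws2 h1
  rw [← heq] at hsleep
  exact (hd v hsleep).2 (by rw [hleg, hk])

lemma step_inv (σ : ℤ → ℕ) (V : Finset ℤ) (u' : ℤ → ℕ)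
    (hws : ∀ v ∈ V, WeaklyStableAt instr σ u' v)
    (c : ℤ → SiteState) (m : ℤ → ℕ) (v : ℤ) (hv : v ∈ V)
    (hI : ARWInv instr σ V u' (c, m)) (k : ℕ) (hleg : c v = SiteState.active (k + 1)) :
    ARWInv instr σ V u'
      (applyInstr c v (instr v (m v + 1)), Function.update m v (m v + 1)) := by
  have hbnd := step_bound instr σ V u' hws c m v hv hI k hleg
  obtain ⟨ha, hb, hc, hd⟩ := hI
  dsimp only at ha hb hc hd
  refine ⟨?_, ?_, ?_, ?_⟩ <;> dsimp only
  · intro w hw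
    rw [Function.update_of_ne (by rintro rfl; exact hw hv)]
    exact ha w hw
  · intro w hw
    by_cases h : w = v
    · subst h; rw [Function.update_self]; exact hbnd
    · rw [Function.update_of_ne h]; exact hb w hw
  · intro w
    rw [height_update, hc w]
    cases hins : instr v (m v + 1) with
    | left =>
      by_cases h1 : w = v
      · subst h1
        simp [applyInstr, hleg, removeP, pz, (show ¬(w + 1 = w) by omega),
          (show ¬(w - 1 = w) by omega)]
      · by_cases h2 : w = v - 1
        · have h3 : w + 1 = v := by omega
          simp [applyInstr, h1, h2, h3, pz_addP, (show ¬(w - 1 = v) by omega)]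
        · have h3 : ¬(w + 1 = v) := by omega
          simp [applyInstr, h1, h2, h3]
    | right =>
      by_cases h1 : w = v
      · subst h1
        simp [applyInstr, hleg, removeP, pz, (show ¬(w + 1 = w) by omega),
          (show ¬(w - 1 = w) by omega)]
      · by_cases h2 : w = v + 1
        · have h3 : w - 1 = v := by omega
          simp [applyInstr, h1, h2, h3, pz_addP, (show ¬(w + 1 = v) by omega)]
        · have h3 : ¬(w - 1 = v) := by omega
          simp [applyInstr, h1, h2, h3]
    | sleep =>
      by_cases h1 : w = v
      · subst h1
        by_cases h2 : c w = SiteState.active 1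
        · simp [applyInstr, h2, pz]
        · simp [applyInstr, h2]
      · simp [applyInstr, h1]
  · intro w hsleep
    by_cases h : w = v
    · subst h
      rw [Function.update_self] at hsleep
      rw [hsleep]
      simp only [applyInstr, if_pos rfl]
      by_cases hk1 : c w = SiteState.active 1
      · simp [hk1]
      · rw [if_neg hk1]
        refine ⟨?_, hk1⟩
        rw [hleg]
        simp
    · rw [Function.update_of_ne h] at hsleep
      have hdw := hd w hsleep
      have haddP : addP (c w) ≠ SiteState.active 0 ∧ addP (c w) ≠ SiteState.active 1 := by
        rcases hcw : c w with _ | n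
        · simp [addP]
        · rw [hcw] at hdw
          simp only [addP]
          constructor <;> intro hcontra <;> injection hcontra with hn
          · omega
          · exact hdw.1 (by rw [show n = 0 by omega])
      cases instr v (m v + 1) with
      | left =>
        simp only [applyInstr, if_neg h]
        split_ifs
        · exact haddP
        · exact hdw
      | right =>
        simp only [applyInstr, if_neg h]
        split_ifs
        · exact haddP
        · exact hdw
      | sleep =>
        simp only [applyInstr, if_neg h]
        exact hdw

lemma run_inv (σ : ℤ → ℕ) (V : Finset ℤ) (u' : ℤ → ℕ)
    (hws : ∀ v ∈ V, WeaklyStableAt instr σ u' v) :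
    ∀ (l : List ℤ) (p : (ℤ → SiteState) × (ℤ → ℕ)),
      (∀ v ∈ l, v ∈ V) → Legal instr l p → ARWInv instr σ V u' p →
      ARWInv instr σ V u' (run instr l p) := by
  intro l
  induction l with
  | nil => intro p _ _ hI; exact hI
  | cons v l ih =>
    intro p hl hlegal hI
    obtain ⟨⟨k, hk⟩, hlegal'⟩ := hlegal
    have hv : v ∈ V := hl v (List.mem_cons_self)
    have hstep := step_inv instr σ V u' hws p.1 p.2 v hv hI k hk
    exact ih _ (fun w hw => hl w (List.mem_cons_of_mem v hw)) hlegal' hstep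

end Aux

/-- Least-action principle: if `u` is the true odometer stabilizing the finite
set `V` (the odometer of a legal toppling sequence within `V` whose final
configuration is stable on `V`, started from a configuration `σ` with no
sleeping particles), and `u'` is weakly stable on `V` for the same instructions
and initial configuration, then `u ≤ u'` on `V`. -/
theorem least_action_principle (instr : ℤ → ℕ → Instr)
    (hinstr0 : ∀ v, instr v 0 = Instr.left)
    (σ : ℤ → ℕ) (V : Finset ℤ) (l : List ℤ) (hl : ∀ v ∈ l, v ∈ V)
    (hlegal : Legal instr l (fun v => SiteState.active (σ v), fun _ => 0))
    (hstab : StableOn (run instr l (fun v => SiteState.active (σ v), fun _ => 0)).1 V)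
    (u' : ℤ → ℕ) (hws : ∀ v ∈ V, WeaklyStableAt instr σ u' v) :
    ∀ v ∈ V, (run instr l (fun v => SiteState.active (σ v), fun _ => 0)).2 v ≤ u' v := by
  have hI0 : ARWInv instr σ V u' (fun v => SiteState.active (σ v), fun _ => 0) := by
    refine ⟨fun w _ => rfl, fun w _ => Nat.zero_le _, ?_, ?_⟩
    · intro w
      simp [height, Lcount, Rcount, pz]
    · intro w hsleep
      rw [hinstr0 w] at hsleep
      cases hsleep
  have hfin := run_inv instr σ V u' hws l _ hl hlegal hI0
  exact fun v hv => hfin.2.1 v hv
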